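/- Let n ≥ 1 and suppose p = 2n+1 is prime. Then the polynomial θ_n(z) = Σ_{k=0}^{n} c_k^{(n)} z^k with c_k^{(n)} = C(n+k,2k) + 2·C(n+k,2k+1) is irreducible over ℚ. -/

import Mathlib

open Finset Polynomial

/-- The coefficient `c_k^{(n)} = C(n+k,2k) + 2·C(n+k,2k+1)` of `θ_n`. -/
def thetaCoeff (n k : ℕ) : ℤ := ((n + k).choose (2 * k) : ℤ) + 2 * ((n + k).choose (2 * k + 1) : ℤ)

/-- The integer polynomial `θ_n(z) = Σ_{k=0}^{n} c_k^{(n)} z^k`. -/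
noncomputable def thetaPoly (n : ℕ) : Polynomial ℤ :=
  ∑ k ∈ Finset.range (n + 1), Polynomial.C (thetaCoeff n k) * Polynomial.X ^ k

lemma thetaPoly_coeff (n k : ℕ) :
    (thetaPoly n).coeff k = if k ≤ n then thetaCoeff n k else 0 := by
  rw [thetaPoly, Polynomial.finset_sum_coeff]
  simp only [Polynomial.coeff_C_mul, Polynomial.coeff_X_pow, mul_ite, mul_one, mul_zero]
  rw [Finset.sum_ite_eq (Finset.range (n+1)) k (fun j => thetaCoeff n j)]
  simp [Nat.lt_succ_iff]

lemma thetaCoeff_top (n : ℕ) : thetaCoeff n n = 1 := by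
  simp [thetaCoeff, Nat.choose_self, two_mul, Nat.choose_eq_zero_of_lt (by omega : n + n < 2*n+1)]

lemma thetaPoly_natDegree (n : ℕ) : (thetaPoly n).natDegree = n := by
  apply le_antisymm
  · apply Polynomial.natDegree_le_iff_coeff_eq_zero.2
    intro m hm
    rw [thetaPoly_coeff]
    rw [if_neg (by omega)]
  · apply Polynomial.le_natDegree_of_ne_zero
    rw [thetaPoly_coeff]
    simp [thetaCoeff_top]

lemma thetaPoly_monic (n : ℕ) : (thetaPoly n).Monic := by
  rw [Polynomial.Monic, Polynomial.leadingCoeff, thetaPoly_natDegree, thetaPoly_coeff]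
  simp [thetaCoeff_top]

lemma key_identity (n k : ℕ) :
    (2 * k + 1 : ℤ) * thetaCoeff n k = (2 * n + 1 : ℤ) * ((n + k).choose (2 * k) : ℤ) := by
  have h := Nat.choose_succ_right_eq (n + k) (2 * k)
  -- (n+k).choose (2k+1) * (2k+1) = (n+k).choose (2k) * (n+k-2k)
  rcases le_or_gt k n with hkn | hkn
  · have hsub : n + k - 2 * k = n - k := by omega
    rw [hsub] at h
    have h' : ((n + k).choose (2 * k + 1) : ℤ) * (2 * k + 1) =
        ((n + k).choose (2 * k) : ℤ) * (n - k : ℕ) := by exact_mod_cast h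
    rw [Int.ofNat_sub hkn] at h'
    unfold thetaCoeff
    ring_nf
    ring_nf at h'
    nlinarith [h']
  · have h1 : (n + k).choose (2 * k) = 0 := Nat.choose_eq_zero_of_lt (by omega)
    have h2 : (n + k).choose (2 * k + 1) = 0 := Nat.choose_eq_zero_of_lt (by omega)
    simp [thetaCoeff, h1, h2]

lemma dvd_thetaCoeff (n k : ℕ) (hk : k < n) (hp : Nat.Prime (2 * n + 1)) :
    (2 * n + 1 : ℤ) ∣ thetaCoeff n k := by
  have hdvd : (2 * n + 1 : ℤ) ∣ (2 * k + 1 : ℤ) * thetaCoeff n k := by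
    rw [key_identity]; exact Dvd.intro _ rfl
  have hpz : Prime (2 * (n : ℤ) + 1) := by
    have := Nat.prime_iff_prime_int.1 hp; push_cast at this ⊢; exact this
  have : (2 * (n:ℤ) + 1) ∣ (2 * k + 1 : ℤ) * thetaCoeff n k := by exact_mod_cast hdvd
  rcases hpz.dvd_mul.1 this with h | h
  · exfalso
    have := Int.le_of_dvd (by positivity) h
    have : 2 * (n:ℤ) + 1 ≤ 2 * k + 1 := this
    omega
  · exact_mod_cast h

theorem stmt_18 (n : ℕ) (hn : 1 ≤ n) (hp : Nat.Prime (2 * n + 1)) :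
    Irreducible ((thetaPoly n).map (Int.castRingHom ℚ)) := by
  set p : ℤ := ((2 * n + 1 : ℕ) : ℤ) with hpdef
  have hpz : Prime p := Nat.prime_iff_prime_int.1 hp
  have heis : (thetaPoly n).IsEisensteinAt (Ideal.span {p}) := by
    constructor
    · rw [thetaPoly_monic n, Ideal.mem_span_singleton]
      intro h
      exact hpz.not_unit (isUnit_of_dvd_one h)
    · intro i hi
      rw [thetaPoly_natDegree] at hi
      rw [thetaPoly_coeff, if_pos hi.le, Ideal.mem_span_singleton]
      have hd := dvd_thetaCoeff n i hi hp
      exact_mod_cast hd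
    · rw [Ideal.span_singleton_pow, Ideal.mem_span_singleton, thetaPoly_coeff, if_pos (Nat.zero_le n)]
      have hc0 : thetaCoeff n 0 = p := by simp [thetaCoeff, p]; push_cast; ring
      rw [hc0]
      intro h
      have : p ∣ 1 := by
        have hne : p ≠ 0 := hpz.ne_zero
        rcases h with ⟨c, hc⟩
        refine ⟨c, ?_⟩
        have : p * 1 = p * (p * c) := by rw [mul_one]; conv_lhs => rw [hc, sq]; rw [mul_assoc]
        exact mul_left_cancel₀ hne this
      exact hpz.not_unit (isUnit_of_dvd_one this)
  have hirr : Irreducible (thetaPoly n) := by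
    apply heis.irreducible (Ideal.span_singleton_prime hpz.ne_zero |>.2 hpz)
      (thetaPoly_monic n).isPrimitive
    rw [thetaPoly_natDegree]; omega
  have := ((thetaPoly_monic n).isPrimitive.irreducible_iff_irreducible_map_fraction_map
    (K := ℚ)).1 hirr
  simpa [algebraMap_int_eq] using this
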